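/- Let U = 2^w, V = 2^ℓ, and let r be a uniformly random odd element of [2^{w+ℓ}]. Define h(x) = ⌊(r·x mod 2^{w+ℓ}) / 2^w⌋. Then for any fixed distinct z, z' ∈ [2^w], the probability over r that h(z) = h(z') is at most 2/2^ℓ. -/

import Mathlib

open Finset

private lemma odd_count (n : ℕ) :
    ((Finset.range (2 * n)).filter (fun r => Odd r)).card = n := by
  induction n with
  | zero => simp
  | succ k ih =>
    have h1 : 2 * (k + 1) = (2 * k + 1) + 1 := by ring
    rw [h1, Finset.range_add_one, Finset.filter_insert, Finset.range_add_one,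
      Finset.filter_insert]
    have hodd : Odd (2 * k + 1) := ⟨k, by ring⟩
    have heven : ¬ Odd (2 * k) := by simp [Nat.odd_iff]
    rw [if_pos hodd, if_neg heven, Finset.card_insert_of_notMem (by
      simp [Finset.mem_filter])]
    rw [ih]

private lemma key (w ℓ : ℕ) (hℓ : 1 ≤ ℓ) (z z' : ℕ)
    (hz : z < 2 ^ w) (hlt : z' < z) :
    (((Finset.range (2 ^ (w + ℓ))).filter fun r =>
        Odd r ∧ (r * z % 2 ^ (w + ℓ)) / 2 ^ w
          = (r * z' % 2 ^ (w + ℓ)) / 2 ^ w).card) ≤ 2 ^ w := by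
  set d := z - z' with hd_def
  have hd : 0 < d := by omega
  have hdw : d < 2 ^ w := by omega
  set j := d.factorization 2 with hj_def
  set o := d / 2 ^ j with ho_def
  have hdo : 2 ^ j * o = d := Nat.ordProj_mul_ordCompl_eq_self d 2
  have ho_odd : Odd o := by
    have := Nat.not_dvd_ordCompl Nat.prime_two hd.ne'
    exact Nat.odd_iff.mpr (Nat.two_dvd_ne_zero.mp this)
  have hjw : j < w := by
    have h1 : 2 ^ j ≤ d := Nat.ordProj_le 2 hd.ne'
    have : 2 ^ j < 2 ^ w := lt_of_le_of_lt h1 hdw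
    exact (Nat.pow_lt_pow_iff_right (by norm_num)).mp this
  set m := 2 ^ (w + ℓ) with hm_def
  set M := 2 ^ (w + ℓ - j) with hM_def
  set c := 2 ^ (w - j) with hc_def
  have hmM : m = 2 ^ j * M := by
    rw [hm_def, hM_def, ← pow_add]; congr 1; omega
  have hwc : 2 ^ w = 2 ^ j * c := by
    rw [hc_def, ← pow_add]; congr 1; omega
  have hMc : 2 * c ≤ M := by
    rw [hM_def, hc_def]
    calc 2 * 2 ^ (w - j) = 2 ^ (w - j + 1) := by ring
    _ ≤ 2 ^ (w + ℓ - j) := Nat.pow_le_pow_right (by norm_num) (by omega)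
  have hc_even : c % 2 = 0 := by
    rw [hc_def, Nat.pow_mod]
    simp [Nat.zero_pow (show 0 < w - j by omega)]
  have hM_even : M % 2 = 0 := by
    rw [hM_def, Nat.pow_mod]
    simp [Nat.zero_pow (show 0 < w + ℓ - j by omega)]
  have hm_even : m % 2 = 0 := by
    rw [hm_def, Nat.pow_mod]
    simp [Nat.zero_pow (show 0 < w + ℓ by omega)]
  have hcw : c ≤ 2 ^ w := hwc ▸ Nat.le_mul_of_pos_left c (Nat.pow_pos (by norm_num))
  have hwm : 2 ^ w ≤ m := Nat.pow_le_pow_right (by norm_num) (by omega)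
  have hm_pos : 0 < m := Nat.pow_pos (by norm_num)
  have hM_pos : 0 < M := Nat.pow_pos (by norm_num)
  have hc_pos : 0 < c := Nat.pow_pos (by norm_num)
  have hMm : M ∣ m := ⟨2 ^ j, by rw [hmM]; ring⟩
  have hco : Nat.Coprime o m := (Nat.coprime_two_right.mpr ho_odd).pow_right _
  -- the injection
  set f : ℕ → ℕ := fun u => if u < c then u / 2 else (u - (M - c)) / 2 + c / 2
    with hf_def
  set φ : ℕ → ℕ × ℕ := fun r => ((r * o % m) / M, f (r * o % m % M)) with hφ_def
  have key_facts : ∀ r ∈ (Finset.range m).filter (fun r =>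
      Odd r ∧ (r * z % m) / 2 ^ w = (r * z' % m) / 2 ^ w),
      (r * o % m) / M < 2 ^ j ∧ (r * o % m % M) % 2 = 1 ∧
      (r * o % m % M < c ∨ M - c < r * o % m % M) := by
    intro r hr
    rw [Finset.mem_filter, Finset.mem_range] at hr
    obtain ⟨hrm, hrodd, hcol⟩ := hr
    set t := r * o % m with ht_def
    have ht : t < m := Nat.mod_lt _ hm_pos
    have ht_odd : t % 2 = 1 := by
      rw [ht_def, Nat.mod_mod_of_dvd _ (by omega : (2:ℕ) ∣ m)]
      rw [Nat.mul_mod, Nat.odd_iff.mp hrodd, Nat.odd_iff.mp ho_odd]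
    set u := t % M with hu_def
    have hu_odd : u % 2 = 1 := by
      rw [hu_def, Nat.mod_mod_of_dvd _ (by omega : (2:ℕ) ∣ M), ht_odd]
    have huM : u < M := Nat.mod_lt _ hM_pos
    -- Step A : r*d % m < 2^w ∨ m - 2^w < r*d % m
    set a := r * z % m with ha_def
    set b := r * z' % m with hb_def
    set rd := r * d % m with hrd_def
    have ha : a < m := Nat.mod_lt _ hm_pos
    have hb : b < m := Nat.mod_lt _ hm_pos
    have hrdm : rd < m := Nat.mod_lt _ hm_pos
    have hsum : (b + rd) % m = a := by
      rw [hb_def, hrd_def, ← Nat.add_mod, ha_def]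
      congr 1
      have hzz : z = z' + d := by omega
      rw [hzz]; ring
    have hab1 : a < b + 2 ^ w := by
      have h1 : a < 2 ^ w * (a / 2 ^ w) + 2 ^ w := by
        have := Nat.div_add_mod a (2 ^ w)
        have := Nat.mod_lt a (show 0 < 2 ^ w from Nat.pow_pos (by norm_num))
        omega
      have h2 : 2 ^ w * (b / 2 ^ w) ≤ b := Nat.mul_div_le b (2 ^ w)
      rw [hcol] at h1
      omega
    have hab2 : b < a + 2 ^ w := by
      have h1 : b < 2 ^ w * (b / 2 ^ w) + 2 ^ w := by
        have := Nat.div_add_mod b (2 ^ w)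
        have := Nat.mod_lt b (show 0 < 2 ^ w from Nat.pow_pos (by norm_num))
        omega
      have h2 : 2 ^ w * (a / 2 ^ w) ≤ a := Nat.mul_div_le a (2 ^ w)
      rw [← hcol] at h1
      omega
    have hsum' : b + rd = a ∨ b + rd = a + m := by
      rcases Nat.lt_or_ge (b + rd) m with h | h
      · left; rw [← hsum, Nat.mod_eq_of_lt h]
      · right
        have : (b + rd) % m = (b + rd - m) % m := (Nat.mod_eq_sub_mod h)
        rw [this, Nat.mod_eq_of_lt (by omega)] at hsum
        omega
    have stepA : rd < 2 ^ w ∨ m - 2 ^ w < rd := by omega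
    -- Step B : rd = 2^j * u
    have stepB : rd = 2 ^ j * u := by
      rw [hrd_def, hu_def, ht_def, Nat.mod_mod_of_dvd _ hMm, ← hdo,
        show r * (2 ^ j * o) = 2 ^ j * (r * o) by ring, hmM,
        Nat.mul_mod_mul_left]
    -- Step C
    have stepC : u < c ∨ M - c < u := by
      rcases stepA with h | h
      · left
        rw [stepB, hwc] at h
        exact lt_of_mul_lt_mul_left h (Nat.zero_le _)
      · right
        have e : m - 2 ^ w = 2 ^ j * (M - c) := by
          rw [hmM, hwc, Nat.mul_sub]
        rw [stepB, e] at h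
        exact lt_of_mul_lt_mul_left h (Nat.zero_le _)
    refine ⟨?_, hu_odd, stepC⟩
    rw [Nat.div_lt_iff_lt_mul hM_pos, ← hmM]
    exact ht
  have hinj : (((Finset.range m).filter fun r =>
      Odd r ∧ (r * z % m) / 2 ^ w = (r * z' % m) / 2 ^ w).card)
      ≤ ((Finset.range (2 ^ j)) ×ˢ (Finset.range c)).card := by
    apply Finset.card_le_card_of_injOn φ
    · intro r hr
      obtain ⟨h1, h2, h3⟩ := key_facts r hr
      rw [Finset.mem_coe, Finset.mem_product, Finset.mem_range, Finset.mem_range]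
      refine ⟨h1, ?_⟩
      rw [hφ_def]
      simp only [hf_def]
      split_ifs with h
      · omega
      · have : r * o % m % M < M := Nat.mod_lt _ hM_pos
        omega
    · intro r₁ hr₁ r₂ hr₂ heq
      simp only [Finset.coe_filter, Set.mem_setOf_eq, Finset.mem_range] at hr₁ hr₂
      obtain ⟨g1, g2, g3⟩ := key_facts r₁ (by
        rw [Finset.mem_filter, Finset.mem_range]; exact ⟨hr₁.1, hr₁.2⟩)
      obtain ⟨k1, k2, k3⟩ := key_facts r₂ (by
        rw [Finset.mem_filter, Finset.mem_range]; exact ⟨hr₂.1, hr₂.2⟩)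
      rw [hφ_def] at heq
      have hdiv : (r₁ * o % m) / M = (r₂ * o % m) / M := congrArg Prod.fst heq
      have hfeq : f (r₁ * o % m % M) = f (r₂ * o % m % M) := congrArg Prod.snd heq
      have humod : r₁ * o % m % M = r₂ * o % m % M := by
        have hu1 : r₁ * o % m % M < M := Nat.mod_lt _ hM_pos
        have hu2 : r₂ * o % m % M < M := Nat.mod_lt _ hM_pos
        simp only [hf_def] at hfeq
        split_ifs at hfeq <;> omega
      have hteq : r₁ * o % m = r₂ * o % m := by
        have d1 := Nat.div_add_mod (r₁ * o % m) M
        have d2 := Nat.div_add_mod (r₂ * o % m) M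
        rw [← d1, ← d2, hdiv, humod]
      have hmodeq : r₁ ≡ r₂ [MOD m] :=
        Nat.ModEq.cancel_right_of_coprime (by rwa [Nat.coprime_comm] at hco) hteq
      have := hmodeq
      unfold Nat.ModEq at this
      rw [Nat.mod_eq_of_lt hr₁.1, Nat.mod_eq_of_lt hr₂.1] at this
      exact this
  calc _ ≤ ((Finset.range (2 ^ j)) ×ˢ (Finset.range c)).card := hinj
  _ = 2 ^ j * c := by rw [Finset.card_product, Finset.card_range, Finset.card_range]
  _ = 2 ^ w := hwc.symm

/-- For distinct `z, z' ∈ [2^w]`, the probability over a uniformly random odd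
`r ∈ [2^{w+ℓ}]` that `h(z) = h(z')` (with `h(x) = ⌊(r·x mod 2^{w+ℓ})/2^w⌋`)
is at most `2/2^ℓ`. -/
theorem dietzfelbinger_collision_prob (w ℓ : ℕ) (hℓw : ℓ ≤ w)
    (z z' : ℕ) (hz : z < 2 ^ w) (hz' : z' < 2 ^ w) (hne : z ≠ z') :
    ((((Finset.range (2 ^ (w + ℓ))).filter fun r =>
          Odd r ∧ (r * z % 2 ^ (w + ℓ)) / 2 ^ w
            = (r * z' % 2 ^ (w + ℓ)) / 2 ^ w).card : ℝ))
      ≤ (2 / 2 ^ ℓ) *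
        (((Finset.range (2 ^ (w + ℓ))).filter fun r => Odd r).card : ℝ) := by
  have hw : 1 ≤ w := by
    by_contra h
    interval_cases w <;> omega
  have hN : ((Finset.range (2 ^ (w + ℓ))).filter fun r => Odd r).card
      = 2 ^ (w + ℓ - 1) := by
    have : 2 ^ (w + ℓ) = 2 * 2 ^ (w + ℓ - 1) := by
      rw [← pow_succ']; congr 1; omega
    rw [this, odd_count]
  have hsub : (((Finset.range (2 ^ (w + ℓ))).filter fun r =>
        Odd r ∧ (r * z % 2 ^ (w + ℓ)) / 2 ^ w
          = (r * z' % 2 ^ (w + ℓ)) / 2 ^ w).card)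
      ≤ ((Finset.range (2 ^ (w + ℓ))).filter fun r => Odd r).card := by
    apply Finset.card_le_card
    intro x hx
    rw [Finset.mem_filter] at hx ⊢
    exact ⟨hx.1, hx.2.1⟩
  rcases Nat.eq_zero_or_pos ℓ with hl0 | hl1
  · subst hl0
    have h1 : (2:ℝ) / 2 ^ (0:ℕ) = 2 := by norm_num
    rw [h1]
    have := Nat.cast_le (α := ℝ) |>.mpr hsub
    nlinarith [Nat.cast_nonneg (α := ℝ)
      (((Finset.range (2 ^ (w + 0))).filter fun r => Odd r).card)]
  · have hkey : (((Finset.range (2 ^ (w + ℓ))).filter fun r =>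
        Odd r ∧ (r * z % 2 ^ (w + ℓ)) / 2 ^ w
          = (r * z' % 2 ^ (w + ℓ)) / 2 ^ w).card) ≤ 2 ^ w := by
      rcases Nat.lt_or_ge z' z with h | h
      · exact key w ℓ hl1 z z' hz h
      · have hlt : z < z' := by omega
        have hset : ((Finset.range (2 ^ (w + ℓ))).filter fun r =>
            Odd r ∧ (r * z % 2 ^ (w + ℓ)) / 2 ^ w
              = (r * z' % 2 ^ (w + ℓ)) / 2 ^ w)
            = ((Finset.range (2 ^ (w + ℓ))).filter fun r =>
            Odd r ∧ (r * z' % 2 ^ (w + ℓ)) / 2 ^ w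
              = (r * z % 2 ^ (w + ℓ)) / 2 ^ w) := by
          apply Finset.filter_congr
          intro x _
          constructor <;> (rintro ⟨h1, h2⟩; exact ⟨h1, h2.symm⟩)
        rw [hset]
        exact key w ℓ hl1 z' z hz' hlt
    rw [hN]
    have hrhs : (2:ℝ) / 2 ^ ℓ * (2 ^ (w + ℓ - 1) : ℕ) = 2 ^ w := by
      push_cast
      have h1 : (2:ℝ) * 2 ^ (w + ℓ - 1) = 2 ^ (w + ℓ) := by
        rw [← pow_succ']; congr 1; omega
      rw [div_mul_eq_mul_div, h1, pow_add]
      field_simp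
    rw [hrhs]
    calc ((((Finset.range (2 ^ (w + ℓ))).filter fun r =>
          Odd r ∧ (r * z % 2 ^ (w + ℓ)) / 2 ^ w
            = (r * z' % 2 ^ (w + ℓ)) / 2 ^ w).card : ℝ))
        ≤ ((2 ^ w : ℕ) : ℝ) := Nat.cast_le.mpr hkey
      _ = (2:ℝ) ^ w := by push_cast; ring
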